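/- arXiv:1508.05540 — 6 statements merged into one kernel-verified Lean document; each statement's English description precedes it below -/
import Mathlib

section
/- Let K be a field of characteristic p > 0 and G a finite p-group. Then every nonzero left ideal of the group ring K[G] contains the element ∑_{σ∈G} σ. -/
set_option synthInstance.maxHeartbeats 1000000 in
/-- Let K be a field of characteristic p > 0 and G a finite p-group.
Then every nonzero left ideal of the group ring K[G] contains ∑_{σ∈G} σ. -/
theorem stmt_0 (K : Type*) [Field K] (p : ℕ) [Fact p.Prime] [CharP K p]
    (G : Type*) [Group G] [Fintype G] (hG : IsPGroup p G)
    (I : Ideal (MonoidAlgebra K G)) (hI : I ≠ ⊥) :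
    (∑ σ : G, MonoidAlgebra.of K G σ) ∈ I := by
  classical
  obtain ⟨x, hxI, hx0⟩ := Submodule.exists_mem_ne_zero_of_ne_bot hI
  haveI : CharP (MonoidAlgebra K G) p :=
    charP_of_injective_ringHom
      (MonoidAlgebra.singleOneRingHom (R := K) (M := G)).injective p
  letI : Algebra (ZMod p) (MonoidAlgebra K G) := ZMod.algebra _ p
  set V : Submodule (ZMod p) (MonoidAlgebra K G) :=
    Submodule.span (ZMod p) (Set.range fun g : G => MonoidAlgebra.of K G g * x) with hV
  -- V is contained in I
  have hVI : (V : Set (MonoidAlgebra K G)) ⊆ I := by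
    intro v hv
    induction hv using Submodule.span_induction with
    | mem v hv => obtain ⟨g, rfl⟩ := hv; exact I.mul_mem_left _ hxI
    | zero => exact I.zero_mem
    | add a b _ _ ha hb => exact I.add_mem ha hb
    | smul c v _ hv =>
        have : c • v = (ZMod.castHom dvd_rfl (MonoidAlgebra K G) c) * v := rfl
        rw [this]; exact I.mul_mem_left _ hv
  have hxV : x ∈ V := Submodule.subset_span ⟨1, by simp only [map_one, one_mul]⟩
  -- V is finite
  haveI : Module.Finite (ZMod p) V :=
    Module.Finite.span_of_finite _ (Set.finite_range _)
  haveI : Finite V := Module.finite_of_finite (ZMod p)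
  -- V is stable under left multiplication by group elements
  have hmul : ∀ (g : G), ∀ v ∈ V, MonoidAlgebra.of K G g * v ∈ V := by
    intro g v hv
    induction hv using Submodule.span_induction with
    | mem v hv =>
        obtain ⟨h, rfl⟩ := hv
        exact Submodule.subset_span ⟨g * h, by simp only [map_mul, mul_assoc]⟩
    | zero => simp only [mul_zero]; exact V.zero_mem
    | add a b _ _ ha hb => rw [mul_add]; exact V.add_mem ha hb
    | smul c v _ hv => rw [mul_smul_comm]; exact V.smul_mem c hv
  letI : MulAction G V :=
    { smul := fun g v => ⟨MonoidAlgebra.of K G g * v, hmul g v v.2⟩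
      one_smul := fun v => Subtype.ext
        (show MonoidAlgebra.of K G 1 * (v : MonoidAlgebra K G) = v by
          rw [map_one, one_mul])
      mul_smul := fun g h v => Subtype.ext
        (show MonoidAlgebra.of K G (g * h) * (v : MonoidAlgebra K G)
            = MonoidAlgebra.of K G g * (MonoidAlgebra.of K G h * (v : MonoidAlgebra K G)) by
          rw [map_mul, mul_assoc]) }
  have hsmul_def : ∀ (g : G) (v : V),
      ((g • v : V) : MonoidAlgebra K G) = MonoidAlgebra.of K G g * v := fun _ _ => rfl
  -- p divides the cardinality of V
  haveI : Fintype V := Fintype.ofFinite V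
  have hdvd : p ∣ Nat.card V := by
    have hnt : Nontrivial V :=
      ⟨⟨⟨x, hxV⟩, 0, fun h => hx0 (congrArg Subtype.val h)⟩⟩
    have hpos : 0 < Module.finrank (ZMod p) V :=
      Module.finrank_pos_iff (R := ZMod p) (M := V) |>.mpr hnt
    rw [Nat.card_eq_fintype_card,
      @Module.card_eq_pow_finrank (ZMod p) V _ _ _ _ _, ZMod.card]
    exact dvd_pow_self p hpos.ne'
  -- a nonzero fixed point
  have h0fix : (0 : V) ∈ MulAction.fixedPoints G V := fun g => Subtype.ext (by
    show MonoidAlgebra.of K G g * (0 : MonoidAlgebra K G) = 0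
    simp)
  obtain ⟨b, hbfix, hb0⟩ :=
    hG.exists_fixed_point_of_prime_dvd_card_of_fixed_point (α := V) hdvd h0fix
  set y : MonoidAlgebra K G := (b : MonoidAlgebra K G) with hy
  have hyI : y ∈ I := hVI b.2
  have hy0 : y ≠ 0 := fun h => hb0 (Subtype.ext h.symm)
  have hfix : ∀ g : G, MonoidAlgebra.of K G g * y = y := fun g =>
    (hsmul_def g b).symm.trans (congrArg Subtype.val (hbfix g))
  -- y has constant coefficients
  have hconst : ∀ g : G, y.coeff g = y.coeff 1 := by
    intro g
    have := congrArg (fun z : MonoidAlgebra K G => z.coeff g) (hfix g)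
    simpa [MonoidAlgebra.of_apply, MonoidAlgebra.single_mul_apply] using this.symm
  set c : K := y.coeff 1 with hc
  have hc0 : c ≠ 0 := by
    intro h
    apply hy0
    ext a
    rw [hconst a, h, MonoidAlgebra.coeff_zero, Finsupp.zero_apply]
  have key : (∑ σ : G, MonoidAlgebra.of K G σ) = MonoidAlgebra.single (1 : G) c⁻¹ * y := by
    ext a
    rw [MonoidAlgebra.coeff_sum, Finset.sum_apply', MonoidAlgebra.single_mul_apply, inv_one, one_mul, hconst a]
    simp only [MonoidAlgebra.of_apply, MonoidAlgebra.coeff_single, Finsupp.single_apply,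
      Finset.sum_ite_eq' (Finset.univ : Finset G) a (fun _ => (1 : K)),
      if_pos (Finset.mem_univ a)]
    rw [inv_mul_cancel₀ hc0]
  rw [key]
  exact I.mul_mem_left _ hyI
end

section
/- Let K be a field of characteristic p > 0, G a finite p-group, and M a K[G]-module generated by a single element m on which the norm element N = ∑_{σ∈G} σ acts nontrivially (N·m ≠ 0). Then M is a free K[G]-module of rank 1. -/
open MonoidAlgebra MulAction

/-- Any nonzero left ideal of `K[G]` (for `G` a finite `p`-group, `char K = p`)
contains the norm element. -/
theorem aux_norm_mem (K : Type*) [Field K] (p : ℕ) [Fact p.Prime] [CharP K p]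
    (G : Type*) [Group G] [Fintype G] (hG : IsPGroup p G)
    (I : Submodule (MonoidAlgebra K G) (MonoidAlgebra K G))
    (x : MonoidAlgebra K G) (hx0 : x ≠ 0) (hxI : x ∈ I) :
    (∑ σ : G, MonoidAlgebra.of K G σ) ∈ I := by
  classical
  have hp : ∀ a : MonoidAlgebra K G, p • a = 0 := by
    intro a
    rw [← Nat.cast_smul_eq_nsmul K p a, CharP.cast_eq_zero K p, zero_smul]
  haveI : NeZero p := ⟨(Fact.out : p.Prime).ne_zero⟩
  haveI : Module (ZMod p) (MonoidAlgebra K G) := AddCommMonoid.zmodModule hp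
  set S : Set (MonoidAlgebra K G) := Set.range (fun g : G => MonoidAlgebra.of K G g * x) with hS
  set W : Submodule (ZMod p) (MonoidAlgebra K G) := Submodule.span (ZMod p) S with hW
  haveI : Module.Finite (ZMod p) ↥W := Module.Finite.span_of_finite (ZMod p) (Set.finite_range _)
  haveI : Finite ↥W := (Module.finite_iff_finite (R := ZMod p)).mp inferInstance
  have hstable : ∀ (g : G) (w : MonoidAlgebra K G), w ∈ W → MonoidAlgebra.of K G g * w ∈ W := by
    intro g w hw
    induction hw using Submodule.span_induction with
    | mem a ha =>
      obtain ⟨h, rfl⟩ := ha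
      apply Submodule.subset_span
      exact ⟨g * h, by simp only [map_mul, mul_assoc]⟩
    | zero => rw [mul_zero]; exact zero_mem _
    | add a b _ _ ha hb => rw [mul_add]; exact add_mem ha hb
    | smul c a _ ha =>
      have : MonoidAlgebra.of K G g * (c • a) = c • (MonoidAlgebra.of K G g * a) :=
        ZMod.map_smul (AddMonoidHom.mulLeft (MonoidAlgebra.of K G g)) c a
      rw [this]; exact Submodule.smul_mem _ _ ha
  letI : MulAction G W :=
    { smul := fun g w => ⟨MonoidAlgebra.of K G g * w.1, hstable g w.1 w.2⟩
      one_smul := fun w => Subtype.ext (by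
        show MonoidAlgebra.of K G 1 * w.1 = w.1
        rw [map_one, one_mul])
      mul_smul := fun g h w => Subtype.ext (by
        show MonoidAlgebra.of K G (g * h) * w.1 = _
        rw [map_mul, mul_assoc]; rfl) }
  have hxW : x ∈ W := Submodule.subset_span ⟨1, by simp only [map_one, one_mul]⟩
  have h0fix : (0 : W) ∈ fixedPoints G W := by
    intro g
    exact Subtype.ext (by show MonoidAlgebra.of K G g * (0 : MonoidAlgebra K G) = 0; rw [mul_zero])
  haveI : Nontrivial W := ⟨⟨⟨x, hxW⟩, 0, by simpa [Subtype.ext_iff] using hx0⟩⟩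
  have hcard : p ∣ Nat.card W := by
    haveI : Fintype W := Fintype.ofFinite _
    rw [Nat.card_eq_fintype_card, Module.card_eq_pow_finrank (K := ZMod p), ZMod.card]
    exact dvd_pow_self p (Module.finrank_pos (R := ZMod p) (M := W)).ne'
  obtain ⟨b, hbfix, hb0⟩ := hG.exists_fixed_point_of_prime_dvd_card_of_fixed_point ↥W hcard h0fix
  set y : MonoidAlgebra K G := b.1 with hy
  have hy0 : y ≠ 0 := fun h => hb0 (Subtype.ext h.symm)
  have hyfix : ∀ g : G, MonoidAlgebra.of K G g * y = y := fun g =>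
    congrArg Subtype.val (hbfix g)
  -- y is in I
  have hSI : S ⊆ I := by
    rintro _ ⟨g, rfl⟩
    exact I.smul_mem (MonoidAlgebra.of K G g) hxI
  have hyI : y ∈ I := by
    have : ∀ w : MonoidAlgebra K G, w ∈ W → w ∈ I := by
      intro w hw
      induction hw using Submodule.span_induction with
      | mem a ha => exact hSI ha
      | zero => exact zero_mem _
      | add a b _ _ ha hb => exact add_mem ha hb
      | smul c a _ ha => exact ZMod.smul_mem ha c
    exact this y b.2
  -- y is constant
  have hconst : ∀ g : G, y.coeff g = y.coeff 1 := by
    intro g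
    have := congrArg (fun z : MonoidAlgebra K G => z.coeff g) (hyfix g)
    simp only [MonoidAlgebra.of_apply, MonoidAlgebra.coeff_single_mul_apply, inv_mul_cancel, one_mul] at this
    exact this.symm
  have hy1 : y.coeff 1 ≠ 0 := by
    intro h
    apply hy0
    ext g
    rw [hconst g, h]; rfl
  -- the norm is a scalar multiple of y
  have hNy : (∑ σ : G, MonoidAlgebra.of K G σ) = (algebraMap K (MonoidAlgebra K G) (y.coeff 1)⁻¹) • y := by
    have : (algebraMap K (MonoidAlgebra K G) (y.coeff 1)⁻¹) • y = (y.coeff 1)⁻¹ • y := by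
      rw [smul_eq_mul, ← Algebra.smul_def]
    rw [this]
    ext g
    rw [MonoidAlgebra.coeff_smul_apply, smul_eq_mul, hconst g, inv_mul_cancel₀ hy1]
    rw [MonoidAlgebra.coeff_sum, Finset.sum_apply']
    simp [MonoidAlgebra.of_apply, MonoidAlgebra.single_apply]
  rw [hNy]
  exact I.smul_mem _ hyI

/-- Let K be a field of characteristic p > 0, G a finite p-group, and M a
K[G]-module generated by one element m on which the norm element N = ∑_{σ∈G} σ acts
nontrivially. Then M is a free K[G]-module of rank 1, i.e. M ≅ K[G]. -/
theorem stmt_2 (K : Type*) [Field K] (p : ℕ) [Fact p.Prime] [CharP K p]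
    (G : Type*) [Group G] [Fintype G] (hG : IsPGroup p G)
    (M : Type*) [AddCommGroup M] [Module (MonoidAlgebra K G) M]
    (m : M) (hgen : Submodule.span (MonoidAlgebra K G) {m} = ⊤)
    (hN : (∑ σ : G, MonoidAlgebra.of K G σ) • m ≠ 0) :
    Nonempty (M ≃ₗ[MonoidAlgebra K G] MonoidAlgebra K G) := by
  classical
  set A := MonoidAlgebra K G
  let φ := LinearMap.toSpanSingleton A M m
  have hsurj : Function.Surjective φ := by
    rw [← LinearMap.range_eq_top, ← LinearMap.span_singleton_eq_range]
    exact hgen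
  have hinj : Function.Injective φ := by
    rw [← LinearMap.ker_eq_bot]
    rw [Submodule.eq_bot_iff]
    intro x hx
    by_contra hx0
    have hmem := aux_norm_mem K p G hG (LinearMap.ker φ) x hx0 hx
    rw [LinearMap.mem_ker, LinearMap.toSpanSingleton_apply] at hmem
    exact hN hmem
  exact ⟨(LinearEquiv.ofBijective φ ⟨hinj, hsurj⟩).symm⟩
end

section
/- Let F be a field of characteristic not 2 and a, b ∈ F× with [a], [b] linearly independent in F×/(F×)². If δ ∈ F(√a) satisfies Nm_{F(√a)/F}(δ) ≡ b mod (F×)², then there exists δ₂ ∈ F(√b) with Nm_{F(√b)/F}(δ₂) ≡ a mod (F×)² and δ/δ₂ a square in E = F(√a, √b). -/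
/-- char F ≠ 2, [a],[b] independent in F×/(F×)².  If δ = x + y√a ∈ F(√a)
satisfies Nm_{F(√a)/F}(δ) = x² - ay² ≡ b mod (F×)², then there is δ₂ = u + v√b ∈ F(√b)
with Nm_{F(√b)/F}(δ₂) = u² - bv² ≡ a mod (F×)² and δ/δ₂ a square in E = F(√a,√b). -/
theorem stmt_4 (F E : Type*) [Field F] [Field E] [Algebra F E]
    (hchar : ringChar F ≠ 2) (a b : F) (ha : a ≠ 0) (hb : b ≠ 0)
    (hind : ∀ u : F, a ≠ u ^ 2 ∧ b ≠ u ^ 2 ∧ a * b ≠ u ^ 2)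
    (sa sb : E) (hsa : sa ^ 2 = algebraMap F E a) (hsb : sb ^ 2 = algebraMap F E b)
    (hE : Algebra.adjoin F {sa, sb} = ⊤)
    (x y d : F) (hd : d ≠ 0) (hNm : x ^ 2 - a * y ^ 2 = b * d ^ 2) :
    ∃ (u v e : F) (z : E), e ≠ 0 ∧ u ^ 2 - b * v ^ 2 = a * e ^ 2 ∧
      algebraMap F E x + algebraMap F E y * sa =
        z ^ 2 * (algebraMap F E u + algebraMap F E v * sb) := by
  have h2 : (2 : F) ≠ 0 := Ring.two_ne_zero hchar
  have hy : y ≠ 0 := by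
    intro hy0
    subst hy0
    apply (hind (x / d)).2.1
    field_simp
    linear_combination -hNm
  set A := algebraMap F E with hA
  have hc : 2 * a * y ^ 2 ≠ 0 := mul_ne_zero (mul_ne_zero h2 ha) (pow_ne_zero 2 hy)
  refine ⟨x / (2 * a * y ^ 2), -d / (2 * a * y ^ 2), 1 / (2 * a * y), A x + A y * sa + A d * sb,
    one_div_ne_zero (mul_ne_zero (mul_ne_zero h2 ha) hy), ?_, ?_⟩
  · field_simp
    ring_nf
    linear_combination hNm
  · have hNm' : A x ^ 2 - A a * A y ^ 2 = A b * A d ^ 2 := by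
      rw [← map_pow, ← map_pow, ← map_pow, ← map_mul, ← map_mul, ← map_sub]
      exact congrArg A hNm
    have hAc : A (2 * a * y ^ 2) ≠ 0 := (map_ne_zero A).mpr hc
    have key : (A x + A y * sa + A d * sb) ^ 2 * (A x - A d * sb)
        = (A x + A y * sa) * A (2 * a * y ^ 2) := by
      rw [map_mul, map_mul, map_pow, map_ofNat]
      linear_combination (A x * A y ^ 2 - A y ^ 2 * A d * sb) * hsa
        + (-(A x * A d ^ 2) - A d ^ 3 * sb - 2 * A y * A d ^ 2 * sa) * hsb
        + (A x + 2 * A y * sa + A d * sb) * hNm'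
    have h1 : A (x / (2 * a * y ^ 2)) + A (-d / (2 * a * y ^ 2)) * sb
        = (A x - A d * sb) / A (2 * a * y ^ 2) := by
      rw [map_div₀, map_div₀, map_neg]
      ring
    rw [h1, ← mul_div_assoc, eq_div_iff hAc, ← key]
end

section
/- Let F be a field of characteristic 2 and a, b ∈ F such that [a], [b] are linearly independent in F/℘(F), where ℘(x) = x² - x. Let θ_a, θ_b be roots of ℘(X) = a and ℘(X) = b respectively, and E = F(θ_a, θ_b). If δ₁ = x + yθ_a ∈ F(θ_a) with x, y ∈ F and y = b + ℘(d) for some d ∈ F, then δ₂ := x + aθ_b + ab + ad² ∈ F(θ_b) satisfies δ₁ - δ₂ ∈ ℘(E) and Tr_{F(θ_b)/F}(δ₂) ≡ a mod ℘(F). -/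
open Polynomial


/-- char F = 2, [a],[b] independent in F/℘(F) (℘(x) = x² - x); θ_a ∈ E,
θ_b ∈ K = F(θ_b) are Artin–Schreier roots, E = F(θ_a,θ_b).  If δ₁ = x + yθ_a with
y = b + ℘(d), then δ₂ := x + aθ_b + ab + ad² ∈ K satisfies δ₁ - δ₂ ∈ ℘(E) and
Tr_{K/F}(δ₂) ≡ a mod ℘(F). -/
theorem stmt_5 (F K E : Type*) [Field F] [Field K] [Field E]
    [Algebra F K] [Algebra K E] [Algebra F E] [IsScalarTower F K E]
    (hchar : ringChar F = 2) (a b : F)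
    (hind : ∀ u : F, a ≠ u ^ 2 - u ∧ b ≠ u ^ 2 - u ∧ a + b ≠ u ^ 2 - u)
    (θa : E) (hθa : θa ^ 2 - θa = algebraMap F E a)
    (θb : K) (hθb : θb ^ 2 - θb = algebraMap F K b)
    (hK : Algebra.adjoin F {θb} = ⊤) (hK2 : Module.finrank F K = 2)
    (hE : Algebra.adjoin F {θa, algebraMap K E θb} = ⊤)
    (x y d : F) (hy : y = b + (d ^ 2 - d)) :
    (∃ z : E,
        (algebraMap F E x + algebraMap F E y * θa) -
          algebraMap K E (algebraMap F K x + algebraMap F K a * θb +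
            algebraMap F K (a * b) + algebraMap F K (a * d ^ 2)) = z ^ 2 - z) ∧
      ∃ f : F,
        Algebra.trace F K (algebraMap F K x + algebraMap F K a * θb +
          algebraMap F K (a * b) + algebraMap F K (a * d ^ 2)) = a + (f ^ 2 - f) := by
  have hcp : CharP F 2 := hchar ▸ ringChar.charP F
  have h2F : (2 : F) = 0 := by exact_mod_cast CharP.cast_eq_zero F 2
  have h2E : (2 : E) = 0 := by
    rw [← map_ofNat (algebraMap F E) 2, h2F, map_zero]
  constructor
  · -- first part
    set A := algebraMap F E a with hA
    set B := algebraMap F E b with hB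
    set D := algebraMap F E d with hD
    set Θ := algebraMap K E θb with hΘdef
    have hΘ : Θ ^ 2 - Θ = B := by
      rw [hΘdef, ← map_pow, ← map_sub, hθb, hB, ← IsScalarTower.algebraMap_apply]
    refine ⟨θa * Θ + D * θa, ?_⟩
    have hmapX : ∀ c : F, algebraMap K E (algebraMap F K c) = algebraMap F E c := fun c => by
      rw [← IsScalarTower.algebraMap_apply]
    simp only [hy, map_add, map_sub, map_mul, map_pow, hmapX]
    linear_combination (Θ ^ 2 + 2 * D * Θ + D ^ 2) * hθa + (θa + A) * hΘ +
      (B * θa + D * θa * Θ - 2 * D * θa ^ 2 * Θ + A * D * Θ + D ^ 2 * θa - D ^ 2 * θa ^ 2 +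
        θa * Θ - θa ^ 2 * Θ ^ 2) * h2E
  · -- second part
    refine ⟨0, ?_⟩
    set p : F[X] := X ^ 2 - X - C b with hp
    have hmonic : p.Monic := by
      rw [hp, sub_sub]
      exact monic_X_pow_sub (n := 2) (by rw [degree_X_add_C]; exact_mod_cast one_lt_two)
    have hdeg : p.natDegree = 2 := by rw [hp]; compute_degree!
    have hint : IsIntegral F θb := by
      refine ⟨p, hmonic, ?_⟩
      simp only [hp, eval₂_sub, eval₂_pow, eval₂_X, eval₂_C]
      rw [show θb ^ 2 - θb - algebraMap F K b = (θb ^ 2 - θb) - algebraMap F K b from rfl, hθb,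
        sub_self]
    have hirr : Irreducible p := by
      rw [Polynomial.irreducible_iff_roots_eq_zero_of_degree_le_three (by omega) (by omega)]
      rw [Multiset.eq_zero_iff_forall_notMem]
      intro r hr
      have hroot : p.IsRoot r := (mem_roots hmonic.ne_zero).mp hr
      have hroot' : r ^ 2 - r - b = 0 := by simpa [hp, IsRoot] using hroot
      exact (hind r).2.1 (by linear_combination -hroot')
    have hmin : minpoly F θb = p := by
      refine (minpoly.eq_of_irreducible_of_monic hirr ?_ hmonic).symm
      simp only [hp, map_sub, map_pow, aeval_X, aeval_C]
      rw [show θb ^ 2 - θb - algebraMap F K b = (θb ^ 2 - θb) - algebraMap F K b from rfl, hθb,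
        sub_self]
    have hnext : p.nextCoeff = -1 := by
      rw [nextCoeff_of_natDegree_pos (by omega), hdeg]
      simp [hp, coeff_X_pow, coeff_C]
    have htr : Algebra.trace F K θb = 1 := by
      let pb : PowerBasis F K :=
        (Algebra.adjoin.powerBasis hint).map
          ((Subalgebra.equivOfEq _ _ hK).trans Subalgebra.topEquiv)
      have hgen : pb.gen = θb := by
        simp [pb, PowerBasis.map_gen, Algebra.adjoin.powerBasis_gen]
      rw [← hgen, PowerBasis.trace_gen_eq_nextCoeff_minpoly, hgen, hmin, hnext, neg_neg]
    have htrC : ∀ c : F, Algebra.trace F K (algebraMap F K c) = 0 := fun c => by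
      rw [Algebra.trace_algebraMap, hK2, nsmul_eq_mul, Nat.cast_ofNat, h2F, zero_mul]
    have hsm : algebraMap F K a * θb = a • θb := (Algebra.smul_def a θb).symm
    rw [map_add, map_add, map_add, hsm, map_smul, htr, htrC, htrC, htrC]
    simp [smul_eq_mul]
end

section
/- Let F be a field of characteristic not 2, a, b ∈ F× with [a], [b] linearly independent in F×/(F×)², and let M = F(√a, √b). Suppose L/F is a Galois extension with L = M(√δ) for some δ ∈ F(√a) \ (M×)², and suppose Gal(L/F) contains a lift σ₁ of the automorphism of M fixing √b and negating √a. If Nm_{F(√a)/F}(δ) = b·a·f² for some f ∈ F×, then σ₁ has order 4 in Gal(L/F); in particular σ₁² ≠ 1. -/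
/-- char F ≠ 2, M = F(√a,√b), L = M(√δ) Galois over F with
δ = x + y√a ∈ F(√a) not a square in M, σ₁ ∈ Gal(L/F) a lift of the automorphism of M
negating √a and fixing √b.  If Nm_{F(√a)/F}(δ) = x² - ay² = b·a·f² for some f ∈ F×,
then σ₁ has order 4; in particular σ₁² ≠ 1. -/
theorem stmt_7 (F M L : Type*) [Field F] [Field M] [Field L]
    [Algebra F M] [Algebra M L] [Algebra F L] [IsScalarTower F M L]
    (hchar : ringChar F ≠ 2) (a b : F) (ha : a ≠ 0) (hb : b ≠ 0)
    (hind : ∀ u : F, a ≠ u ^ 2 ∧ b ≠ u ^ 2 ∧ a * b ≠ u ^ 2)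
    (sa sb : M) (hsa : sa ^ 2 = algebraMap F M a) (hsb : sb ^ 2 = algebraMap F M b)
    (hM : Algebra.adjoin F {sa, sb} = ⊤)
    (x y : F) (δ : M) (hδ : δ = algebraMap F M x + algebraMap F M y * sa)
    (hδns : ¬∃ m : M, δ = m ^ 2)
    (sδ : L) (hsδ : sδ ^ 2 = algebraMap M L δ)
    (hL : Algebra.adjoin M {sδ} = ⊤) [IsGalois F L]
    (σ₁ : L ≃ₐ[F] L)
    (hσa : σ₁ (algebraMap M L sa) = -algebraMap M L sa)
    (hσb : σ₁ (algebraMap M L sb) = algebraMap M L sb)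
    (f : F) (hf : f ≠ 0) (hNm : x ^ 2 - a * y ^ 2 = b * a * f ^ 2) :
    orderOf σ₁ = 4 ∧ σ₁ ^ 2 ≠ 1 := by
  set A := algebraMap M L with hA
  set δ' : M := algebraMap F M x - algebraMap F M y * sa with hδ'
  have hprod : δ * δ' = algebraMap F M (b * a * f ^ 2) := by
    rw [hδ, hδ', ← hNm, map_sub, map_mul, map_pow, map_pow]
    linear_combination (-(algebraMap F M y)^2) * hsa
  have hbaf : b * a * f ^ 2 ≠ 0 := by
    simp [ha, hb, hf, pow_eq_zero_iff]
  have hδne : δ ≠ 0 := fun h => hδns ⟨0, by simp [h]⟩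
  have hδ'ne : δ' ≠ 0 := by
    intro h
    apply hbaf
    have := hprod
    rw [h, mul_zero] at this
    exact (map_eq_zero _).mp this.symm
  have hAδ : A δ ≠ 0 := fun h => hδne ((map_eq_zero _).mp h)
  have hAδ' : A δ' ≠ 0 := fun h => hδ'ne ((map_eq_zero _).mp h)
  have hsδne : sδ ≠ 0 := by
    intro h
    apply hAδ
    rw [← hsδ, h]; ring
  have hmapxy : ∀ r : F, A (algebraMap F M r) = algebraMap F L r := fun r =>
    (IsScalarTower.algebraMap_apply F M L r).symm
  have hσδ : σ₁ (A δ) = A δ' := by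
    rw [hδ, hδ', map_add, map_mul, map_sub, map_mul, hmapxy, hmapxy, map_add, map_mul,
      AlgEquiv.commutes, AlgEquiv.commutes, hσa]
    ring
  set t := σ₁ sδ with ht
  have ht2 : t ^ 2 = A δ' := by
    rw [ht, ← map_pow, hsδ, hσδ]
  set u : L := algebraMap F L f * A sa * A sb * sδ with hu
  have hsaL : (A sa) ^ 2 = algebraMap F L a := by rw [← map_pow, hsa, hmapxy]
  have hsbL : (A sb) ^ 2 = algebraMap F L b := by rw [← map_pow, hsb, hmapxy]
  have hprodL : A δ * A δ' = algebraMap F L b * algebraMap F L a * (algebraMap F L f) ^ 2 := by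
    rw [← map_mul, hprod, hmapxy, map_mul, map_mul, map_pow]
  have hkey : (t * A δ - u) * (t * A δ + u) = 0 := by
    have h1 : (t * A δ) ^ 2 = u ^ 2 := by
      rw [hu]
      linear_combination (A δ)^2 * ht2 + (A δ) * hprodL
        - (algebraMap F L f)^2 * (algebraMap F L b) * (A δ) * hsaL
        - (algebraMap F L f)^2 * (A sa)^2 * (A δ) * hsbL
        - (algebraMap F L f)^2 * (A sa)^2 * (A sb)^2 * hsδ
    linear_combination h1
  have hσu : σ₁ u = algebraMap F L f * (-(A sa)) * A sb * t := by
    rw [hu, map_mul, map_mul, map_mul, AlgEquiv.commutes, hσa, hσb, ht]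
  -- in both cases: σ₁ t * (A δ' * A δ) = -(fL * saL * sbL * u)
  have hmain : σ₁ t * (A δ' * A δ) =
      -(algebraMap F L f * A sa * A sb * u) := by
    rcases mul_eq_zero.mp hkey with h | h
    · have htu : t * A δ = u := by linear_combination h
      have := congrArg σ₁ htu
      rw [map_mul, hσδ, hσu] at this
      calc σ₁ t * (A δ' * A δ) = (σ₁ t * A δ') * A δ := by ring
        _ = (algebraMap F L f * (-(A sa)) * A sb * t) * A δ := by rw [this]
        _ = -(algebraMap F L f * A sa * A sb * (t * A δ)) := by ring
        _ = -(algebraMap F L f * A sa * A sb * u) := by rw [htu]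
    · have htu : t * A δ = -u := by linear_combination h
      have := congrArg σ₁ htu
      rw [map_mul, map_neg, hσδ, hσu] at this
      calc σ₁ t * (A δ' * A δ) = (σ₁ t * A δ') * A δ := by ring
        _ = (-(algebraMap F L f * (-(A sa)) * A sb * t)) * A δ := by rw [this]
        _ = algebraMap F L f * A sa * A sb * (t * A δ) := by ring
        _ = algebraMap F L f * A sa * A sb * (-u) := by rw [htu]
        _ = -(algebraMap F L f * A sa * A sb * u) := by ring
  have hσ2sδ : σ₁ t = -sδ := by
    have hrhs : -(algebraMap F L f * A sa * A sb * u) = -sδ * (A δ' * A δ) := by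
      rw [hu]
      linear_combination (-(algebraMap F L f)^2 * (A sa)^2 * sδ) * hsbL
        - ((algebraMap F L f)^2 * (algebraMap F L b) * sδ) * hsaL + sδ * hprodL
    have := hmain.trans hrhs
    exact mul_right_cancel₀ (mul_ne_zero hAδ' hAδ) this
  -- two is invertible
  have h2F : (2 : F) ≠ 0 := Ring.two_ne_zero hchar
  have h2L : (2 : L) ≠ 0 := by
    have : algebraMap F L 2 = (2 : L) := by rw [map_ofNat]
    rw [← this]
    exact fun h => h2F ((map_eq_zero _).mp h)
  -- σ₁² ≠ 1
  have hσ2ne : σ₁ ^ 2 ≠ 1 := by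
    intro h
    have : σ₁ (σ₁ sδ) = sδ := by
      rw [← AlgEquiv.mul_apply, ← pow_two, h]; rfl
    rw [← ht, hσ2sδ] at this
    apply hsδne
    have h2 : (2 : L) * sδ = 0 := by linear_combination -this
    rcases mul_eq_zero.mp h2 with h' | h'
    · exact absurd h' h2L
    · exact h'
  -- σ₁² fixes all of the image of M
  have hτM : ∀ m : M, σ₁ (σ₁ (A m)) = A m := by
    intro m
    have hmem : m ∈ Algebra.adjoin F ({sa, sb} : Set M) := hM ▸ Algebra.mem_top
    induction hmem using Algebra.adjoin_induction with
    | mem z hz =>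
      rcases hz with h | h
      · subst h; rw [hσa, map_neg, hσa, neg_neg]
      · rw [Set.mem_singleton_iff] at h; subst h; rw [hσb, hσb]
    | algebraMap r => rw [hmapxy, AlgEquiv.commutes, AlgEquiv.commutes]
    | add z w hz hw ihz ihw => rw [map_add, map_add, map_add, ihz, ihw]
    | mul z w hz hw ihz ihw => rw [map_mul, map_mul, map_mul, ihz, ihw]
  -- σ₁⁴ = 1
  have hσ4 : σ₁ ^ 4 = 1 := by
    apply AlgEquiv.ext
    intro z
    have hz : z ∈ Algebra.adjoin M ({sδ} : Set L) := hL ▸ Algebra.mem_top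
    have hpow : ∀ w : L, (σ₁ ^ 4) w = σ₁ (σ₁ (σ₁ (σ₁ w))) := by
      intro w
      show (σ₁ * σ₁ * σ₁ * σ₁) w = _
      rw [AlgEquiv.mul_apply, AlgEquiv.mul_apply, AlgEquiv.mul_apply]
    rw [hpow]
    show σ₁ (σ₁ (σ₁ (σ₁ z))) = z
    induction hz using Algebra.adjoin_induction with
    | mem z hz =>
      rw [Set.mem_singleton_iff] at hz; subst hz
      rw [← ht, hσ2sδ, map_neg, map_neg, ← ht, hσ2sδ, neg_neg]
    | algebraMap m => rw [show (algebraMap M L) m = A m from rfl, hτM, hτM]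
    | add z w hz hw ihz ihw => simp only [map_add, ihz, ihw]
    | mul z w hz hw ihz ihw => simp only [map_mul, ihz, ihw]
  -- order
  have hdvd : orderOf σ₁ ∣ 4 := orderOf_dvd_of_pow_eq_one hσ4
  have hne1 : σ₁ ≠ 1 := by
    intro h
    exact hσ2ne (by rw [h, one_pow])
  have hord : orderOf σ₁ = 4 := by
    have h1 : orderOf σ₁ ≠ 1 := by
      intro h
      exact hne1 (orderOf_eq_one_iff.mp h)
    have h2 : orderOf σ₁ ≠ 2 := by
      intro h
      exact hσ2ne (h ▸ pow_orderOf_eq_one σ₁)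
    have hle : orderOf σ₁ ≤ 4 := Nat.le_of_dvd (by norm_num) hdvd
    have hpos : 0 < orderOf σ₁ := by
      rcases Nat.eq_zero_or_pos (orderOf σ₁) with h0 | h0
      · rw [h0] at hdvd; norm_num at hdvd
      · exact h0
    interval_cases h : orderOf σ₁
    · exact absurd rfl h1
    · exact absurd rfl h2
    · norm_num at hdvd
    · rfl
  exact ⟨hord, hσ2ne⟩
end

section
/- Let σ₁, σ₂, σ₃ ∈ U_4(𝔽₂) be the images of E_{12}, E_{23}, E_{34} under an automorphism of U_4(𝔽₂), and let σ₂′ be the image of E_{23} under another automorphism. Then σ₂′ ≡ σ₂ modulo the commutator subgroup Φ of U_4(𝔽₂). Equivalently: any automorphism of U_4(𝔽₂) fixes the image of E_{23} in the abelianization U_4(𝔽₂)/Φ. -/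
/-- The submonoid of upper unitriangular n×n matrices over ℤ/p. -/
def unipotentSubmonoid (p n : ℕ) [NeZero p] :
    Submonoid (Matrix (Fin n) (Fin n) (ZMod p))ˣ where
  carrier := {M | (∀ i j : Fin n, j < i → (M : Matrix (Fin n) (Fin n) (ZMod p)) i j = 0) ∧
      ∀ i : Fin n, (M : Matrix (Fin n) (Fin n) (ZMod p)) i i = 1}
  one_mem' := by
    refine ⟨fun i j h => ?_, fun i => ?_⟩
    · simp [Matrix.one_apply, h.ne']
    · simp [Matrix.one_apply]
  mul_mem' := by
    rintro A B ⟨hA, hA1⟩ ⟨hB, hB1⟩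
    refine ⟨fun i j h => ?_, fun i => ?_⟩
    · show (A.val * B.val) i j = 0
      rw [Matrix.mul_apply]
      refine Finset.sum_eq_zero fun k _ => ?_
      rcases lt_or_ge k i with hk | hk
      · rw [hA i k hk, zero_mul]
      · rw [hB k j (lt_of_lt_of_le h hk), mul_zero]
    · show (A.val * B.val) i i = 1
      rw [Matrix.mul_apply]
      rw [Finset.sum_eq_single i (fun k _ hk => ?_) (by simp)]
      · rw [hA1, hB1, one_mul]
      · rcases lt_or_gt_of_ne hk with hlt | hgt
        · rw [hA i k hlt, zero_mul]
        · rw [hB k i hgt, mul_zero]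

/-- `U p n`: the group of upper unitriangular n×n matrices over ℤ/p. -/
def U (p n : ℕ) [NeZero p] : Subgroup (Matrix (Fin n) (Fin n) (ZMod p))ˣ :=
  { unipotentSubmonoid p n with
    inv_mem' := by
      intro x hx
      have h1 : x ^ (orderOf x - 1) ∈ unipotentSubmonoid p n := pow_mem hx _
      have hpos : 0 < orderOf x := orderOf_pos x
      have h2 : x * x ^ (orderOf x - 1) = 1 := by
        rw [← pow_succ', Nat.sub_add_cancel hpos, pow_orderOf_eq_one]
      have : x⁻¹ = x ^ (orderOf x - 1) := inv_eq_of_mul_eq_one_right h2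
      show x⁻¹ ∈ unipotentSubmonoid p n
      rw [this]
      exact h1 }

/-- The elementary unipotent matrix E_{ij} = 1 + e_{ij} over 𝔽₂ (its own inverse). -/
def Emat (i j : Fin 4) : Matrix (Fin 4) (Fin 4) (ZMod 2) :=
  1 + Matrix.single i j 1

lemma mem_U_iff (x : (Matrix (Fin 4) (Fin 4) (ZMod 2))ˣ) :
    x ∈ U 2 4 ↔ ((∀ i j : Fin 4, j < i → (x : Matrix (Fin 4) (Fin 4) (ZMod 2)) i j = 0) ∧
      ∀ i : Fin 4, (x : Matrix (Fin 4) (Fin 4) (ZMod 2)) i i = 1) := Iff.rfl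

def E12 : U 2 4 := ⟨⟨Emat 0 1, Emat 0 1, by decide, by decide⟩, (mem_U_iff _).mpr (by simp [Emat, Matrix.one_apply, Matrix.single]; decide)⟩
def E23 : U 2 4 := ⟨⟨Emat 1 2, Emat 1 2, by decide, by decide⟩, (mem_U_iff _).mpr (by simp [Emat, Matrix.one_apply, Matrix.single]; decide)⟩
def E34 : U 2 4 := ⟨⟨Emat 2 3, Emat 2 3, by decide, by decide⟩, (mem_U_iff _).mpr (by simp [Emat, Matrix.one_apply, Matrix.single]; decide)⟩

namespace Stmt19

open scoped commutatorElement

/-- matrix entries of an element of `U 2 4` -/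
def v (x : U 2 4) : Matrix (Fin 4) (Fin 4) (ZMod 2) :=
  ((x : (Matrix (Fin 4) (Fin 4) (ZMod 2))ˣ) : Matrix (Fin 4) (Fin 4) (ZMod 2))

lemma v_mul (x y : U 2 4) : v (x * y) = v x * v y := rfl

lemma hmem (x : U 2 4) : (∀ i j : Fin 4, j < i → v x i j = 0) ∧ ∀ i : Fin 4, v x i i = 1 :=
  (mem_U_iff _).mp x.2

lemma entryA (x y : U 2 4) : v (x * y) 0 1 = v x 0 1 + v y 0 1 := by
  have hx := hmem x; have hy := hmem y
  rw [v_mul, Matrix.mul_apply, Fin.sum_univ_four,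
    hx.2 0, hy.2 1, hy.1 2 1 (by decide), hy.1 3 1 (by decide)]
  ring

lemma entryB (x y : U 2 4) : v (x * y) 1 2 = v x 1 2 + v y 1 2 := by
  have hx := hmem x; have hy := hmem y
  rw [v_mul, Matrix.mul_apply, Fin.sum_univ_four,
    hx.2 1, hy.2 2, hx.1 1 0 (by decide), hy.1 3 2 (by decide)]
  ring

lemma entryC (x y : U 2 4) : v (x * y) 2 3 = v x 2 3 + v y 2 3 := by
  have hx := hmem x; have hy := hmem y
  rw [v_mul, Matrix.mul_apply, Fin.sum_univ_four,
    hx.2 2, hy.2 3, hx.1 2 0 (by decide), hx.1 2 1 (by decide)]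
  ring


def phi (i j : Fin 4) (hij : i ≠ j) (h : ∀ x y : U 2 4, v (x*y) i j = v x i j + v y i j) :
    U 2 4 →* Multiplicative (ZMod 2) where
  toFun x := Multiplicative.ofAdd (v x i j)
  map_one' := by
    show Multiplicative.ofAdd (v (1 : U 2 4) i j) = 1
    have h1 : v (1 : U 2 4) = 1 := rfl
    rw [h1, Matrix.one_apply_ne hij]
    rfl
  map_mul' x y := by simp only [h x y]; rfl

lemma superdiag_of_mem (w : U 2 4) (hw : w ∈ commutator (U 2 4)) :
    v w 0 1 = 0 ∧ v w 1 2 = 0 ∧ v w 2 3 = 0 := by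
  have h1 := Abelianization.commutator_subset_ker (phi 0 1 (by decide) entryA) hw
  have h2 := Abelianization.commutator_subset_ker (phi 1 2 (by decide) entryB) hw
  have h3 := Abelianization.commutator_subset_ker (phi 2 3 (by decide) entryC) hw
  exact ⟨h1, h2, h3⟩

/-- the matrix 1 + d·e₁₃ + e·e₂₄ + f·e₁₄ -/
def M (d e f : ZMod 2) : Matrix (Fin 4) (Fin 4) (ZMod 2) :=
  !![1, 0, d, f; 0, 1, 0, e; 0, 0, 1, 0; 0, 0, 0, 1]

lemma M_mul_M (d e f : ZMod 2) : M d e f * M d e f = 1 := by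
  ext i j
  fin_cases i <;> fin_cases j <;>
    simp [M, Matrix.mul_apply, Fin.sum_univ_four, Matrix.one_apply, Matrix.vecHead,
      Matrix.vecTail, CharTwo.add_self_eq_zero]

def zElem (d e f : ZMod 2) : U 2 4 :=
  ⟨⟨M d e f, M d e f, M_mul_M d e f, M_mul_M d e f⟩, (mem_U_iff _).mpr (by
    constructor
    · intro i j hij
      fin_cases i <;> fin_cases j <;>
        first
          | exact absurd hij (by decide)
          | simp [M, Matrix.vecHead, Matrix.vecTail]
    · intro i; fin_cases i <;> simp [M, Matrix.vecHead, Matrix.vecTail])⟩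

lemma eq_zElem (w : U 2 4) (h1 : v w 0 1 = 0) (h2 : v w 1 2 = 0) (h3 : v w 2 3 = 0) :
    w = zElem (v w 0 2) (v w 1 3) (v w 0 3) := by
  have hw := hmem w
  apply Subtype.ext; apply Units.ext
  show v w = M (v w 0 2) (v w 1 3) (v w 0 3)
  ext i j
  fin_cases i <;> fin_cases j <;>
    first
      | exact hw.2 _
      | exact hw.1 _ _ (by decide)
      | assumption
      | rfl

lemma z100 : zElem 1 0 0 = ⁅E12, E23⁆ := Subtype.ext (Units.ext (by decide))
lemma z010 : zElem 0 1 0 = ⁅E23, E34⁆ := Subtype.ext (Units.ext (by decide))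
lemma z001 : zElem 0 0 1 = ⁅E12, ⁅E23, E34⁆⁆ := Subtype.ext (Units.ext (by decide))

lemma zElem_mul (d e f d' e' f' : ZMod 2) :
    zElem d e f * zElem d' e' f' = zElem (d + d') (e + e') (f + f') := by
  apply Subtype.ext; apply Units.ext
  show M d e f * M d' e' f' = M (d + d') (e + e') (f + f')
  ext i j
  fin_cases i <;> fin_cases j <;>
    simp [M, Matrix.mul_apply, Fin.sum_univ_four, Matrix.vecHead, Matrix.vecTail] <;> ring

lemma zElem_mem (d e f : ZMod 2) : zElem d e f ∈ commutator (U 2 4) := by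
  have hd : zElem d e f = zElem d 0 0 * zElem 0 e 0 * zElem 0 0 f := by
    rw [zElem_mul, zElem_mul]; ring_nf
  have h2 : ∀ z : ZMod 2, z = 0 ∨ z = 1 := by decide
  have hz0 : zElem 0 0 0 = 1 := Subtype.ext (Units.ext (by decide))
  have key : ∀ a b : U 2 4, ⁅a, b⁆ ∈ commutator (U 2 4) := fun a b =>
    Subgroup.commutator_mem_commutator (Subgroup.mem_top a) (Subgroup.mem_top b)
  rw [hd]
  refine mul_mem (mul_mem ?_ ?_) ?_
  · rcases h2 d with h | h <;> rw [h]
    · rw [hz0]; exact one_mem _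
    · rw [z100]; exact key _ _
  · rcases h2 e with h | h <;> rw [h]
    · rw [hz0]; exact one_mem _
    · rw [z010]; exact key _ _
  · rcases h2 f with h | h <;> rw [h]
    · rw [hz0]; exact one_mem _
    · rw [z001]; exact key _ _

lemma E23_comm_zElem (d e f : ZMod 2) : E23 * zElem d e f = zElem d e f * E23 := by
  apply Subtype.ext; apply Units.ext
  show Emat 1 2 * M d e f = M d e f * Emat 1 2
  ext i j
  fin_cases i <;> fin_cases j <;>
    simp [M, Emat, Matrix.single, Matrix.one_apply, Matrix.mul_apply,
      Fin.sum_univ_four, Matrix.vecHead, Matrix.vecTail]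

/-- from commuting with zElem 1 0 0 (i.e. E₁₃), entry (2,3) vanishes -/
lemma entry23_eq_zero (g : U 2 4) (h : g * zElem 1 0 0 = zElem 1 0 0 * g) :
    v g 2 3 = 0 := by
  have hg := hmem g
  have h' : v (g * zElem 1 0 0) 0 3 = v (zElem 1 0 0 * g) 0 3 := by rw [h]
  rw [v_mul, v_mul] at h'
  have hz : v (zElem 1 0 0) = M 1 0 0 := rfl
  rw [hz, Matrix.mul_apply, Matrix.mul_apply, Fin.sum_univ_four, Fin.sum_univ_four] at h'
  simp [M, Matrix.vecHead, Matrix.vecTail, hg.2 0] at h'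
  exact h'

lemma entry01_eq_zero (g : U 2 4) (h : g * zElem 0 1 0 = zElem 0 1 0 * g) :
    v g 0 1 = 0 := by
  have hg := hmem g
  have h' : v (g * zElem 0 1 0) 0 3 = v (zElem 0 1 0 * g) 0 3 := by rw [h]
  rw [v_mul, v_mul] at h'
  have hz : v (zElem 0 1 0) = M 0 1 0 := rfl
  rw [hz, Matrix.mul_apply, Matrix.mul_apply, Fin.sum_univ_four, Fin.sum_univ_four] at h'
  simp [M, Matrix.vecHead, Matrix.vecTail, hg.2 0] at h'
  exact h'

lemma key_comm (a b : U 2 4) : ⁅a, b⁆ ∈ commutator (U 2 4) :=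
  Subgroup.commutator_mem_commutator (Subgroup.mem_top a) (Subgroup.mem_top b)

lemma hmap (φ : U 2 4 ≃* U 2 4) (x : U 2 4) (hx : x ∈ commutator (U 2 4)) :
    φ x ∈ commutator (U 2 4) := by
  have hfix := (show (commutator (U 2 4)).Characteristic from
    Subgroup.commutator_characteristic ⊤ ⊤).fixed φ
  rw [← hfix] at hx
  exact Subgroup.mem_comap.mp hx

end Stmt19

open Stmt19

/-- every automorphism of U₄(𝔽₂) fixes the image of E₂₃ in the
abelianization U₄(𝔽₂)/[U₄(𝔽₂),U₄(𝔽₂)]; i.e. if σ₂′ is the image of E₂₃ under any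
automorphism, then σ₂′ ≡ E₂₃ modulo the commutator subgroup. -/
theorem stmt_19 (f : U 2 4 ≃* U 2 4) :
    Abelianization.of (f E23) = Abelianization.of E23 := by
  set g := f E23 with hgdef
  have hcent : ∀ y : U 2 4, y ∈ commutator (U 2 4) → g * y = y * g := by
    intro y hy
    have hy' : f.symm y ∈ commutator (U 2 4) := hmap f.symm y hy
    obtain ⟨h1, h2, h3⟩ := superdiag_of_mem _ hy'
    have hyz := eq_zElem _ h1 h2 h3
    have hc : E23 * f.symm y = f.symm y * E23 := by
      rw [hyz]; exact E23_comm_zElem _ _ _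
    have := congrArg f hc
    simpa [map_mul] using this
  have hc : v g 2 3 = 0 :=
    entry23_eq_zero g (hcent _ (by rw [z100]; exact key_comm _ _))
  have ha : v g 0 1 = 0 :=
    entry01_eq_zero g (hcent _ (by rw [z010]; exact key_comm _ _))
  have hb : v g 1 2 = 1 := by
    rcases (show ∀ z : ZMod 2, z = 0 ∨ z = 1 by decide) (v g 1 2) with h | h
    · exfalso
      have hgmem : g ∈ commutator (U 2 4) := by
        rw [eq_zElem g ha h hc]; exact zElem_mem _ _ _
      have hE : E23 ∈ commutator (U 2 4) := by
        have h' := hmap f.symm g hgmem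
        rw [hgdef, MulEquiv.symm_apply_apply] at h'
        exact h'
      have h12 := (superdiag_of_mem _ hE).2.1
      have hne : v E23 1 2 = 1 := by decide
      rw [h12] at hne
      exact absurd hne (by decide)
    · exact h
  have hE23sq : E23 * E23 = 1 := Subtype.ext (Units.ext (by decide))
  have hw : g * E23 ∈ commutator (U 2 4) := by
    have e1 : v (g * E23) 0 1 = 0 := by
      rw [entryA, ha, show v E23 0 1 = (0 : ZMod 2) by decide, add_zero]
    have e2 : v (g * E23) 1 2 = 0 := by
      rw [entryB, hb, show v E23 1 2 = (1 : ZMod 2) by decide]; decide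
    have e3 : v (g * E23) 2 3 = 0 := by
      rw [entryC, hc, show v E23 2 3 = (0 : ZMod 2) by decide, add_zero]
    rw [eq_zElem _ e1 e2 e3]; exact zElem_mem _ _ _
  have h1 : Abelianization.of g * Abelianization.of E23 = 1 := by
    rw [← map_mul]
    exact MonoidHom.mem_ker.mp (Abelianization.commutator_subset_ker _ hw)
  have h2 : (Abelianization.of E23)⁻¹ = Abelianization.of E23 := by
    apply inv_eq_of_mul_eq_one_right
    rw [← map_mul, hE23sq, map_one]
  rw [← h2]
  exact eq_inv_of_mul_eq_one_left h1
end
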